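/- Let w₁, w₂ be nonzero reals with |w₁| ≠ |w₂|, and let μ be a Borel probability measure on ℝ with ∫ x² dμ(x) < ∞ that is not a Dirac measure. Let μ_abs denote the pushforward of μ under x ↦ |x|. Then R_s(μ_abs) = R_s(μ) if and only if μ((−∞,0)) = 0 or μ((0,∞)) = 0, i.e. if and only if the support of μ is contained in [0,∞) or in (−∞,0]. (Lemma 2, equality condition.) -/

import Mathlib

open MeasureTheory Real Filter

/-- The standard Gaussian tail function `Q(x) = ∫_x^∞ (2π)^{-1/2} e^{-u²/2} du`. -/
noncomputable def gaussQ (x : ℝ) : ℝ :=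
  ∫ u in Set.Ioi x, (Real.sqrt (2 * Real.pi))⁻¹ * Real.exp (-u ^ 2 / 2)

/-- `η(t) = -t log t` (with `η(0) = 0`, automatic since `Real.log 0 = 0`). -/
noncomputable def eta (t : ℝ) : ℝ := -t * Real.log t

/-- The binary entropy function `h(p) = -p log p - (1-p) log (1-p)`. -/
noncomputable def binEnt (p : ℝ) : ℝ := eta p + eta (1 - p)

/-- `I(μ, w) = h(∫ Q(w·x) dμ) - ∫ h(Q(w·x)) dμ`, the mutual information of the real
Gaussian channel `Y = sgn(w·X + N)`, `N ~ N(0,1)`, with a one-bit ADC and input `X ~ μ`. -/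
noncomputable def miMeas (μ : Measure ℝ) (w : ℝ) : ℝ :=
  binEnt (∫ x, gaussQ (w * x) ∂μ) - ∫ x, binEnt (gaussQ (w * x)) ∂μ

/-- The Wyner secrecy rate `R_s(μ) = I(μ, w₁) - I(μ, w₂)`. -/
noncomputable def wynerRs (w₁ w₂ : ℝ) (μ : Measure ℝ) : ℝ := miMeas μ w₁ - miMeas μ w₂

noncomputable def gpdf (u : ℝ) : ℝ := (Real.sqrt (2 * Real.pi))⁻¹ * Real.exp (-u ^ 2 / 2)

lemma gpdf_pos (u : ℝ) : 0 < gpdf u := by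
  apply mul_pos (inv_pos.2 (Real.sqrt_pos.2 (by positivity))) (Real.exp_pos _)

lemma gpdf_cont : Continuous gpdf := by
  unfold gpdf; fun_prop

lemma gpdf_even (u : ℝ) : gpdf (-u) = gpdf u := by simp [gpdf]

lemma gpdf_integrable : Integrable gpdf := by
  have h : Integrable (fun u : ℝ => Real.exp (-(1/2 : ℝ) * u ^ 2)) := integrable_exp_neg_mul_sq (by norm_num)
  have : Integrable (fun u : ℝ => Real.exp (-u ^ 2 / 2)) := by
    convert h using 2 with u; ring_nf
  exact this.const_mul _

lemma gpdf_integral : ∫ u, gpdf u = 1 := by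
  have h := integral_gaussian (1/2 : ℝ)
  have h2 : ∫ u : ℝ, Real.exp (-u ^ 2 / 2) = Real.sqrt (2 * Real.pi) := by
    rw [show (Real.sqrt (2*Real.pi)) = Real.sqrt (Real.pi / (1/2)) by norm_num [mul_comm]]
    rw [← h]; congr 1 with u; ring_nf
  have h3 : (Real.sqrt (2*Real.pi)) ≠ 0 := by positivity
  unfold gpdf
  rw [integral_const_mul, h2, inv_mul_cancel₀ h3]

lemma gaussQ_eq (x : ℝ) : gaussQ x = ∫ u in Set.Ioi x, gpdf u := rfl

lemma gaussQ_Iic_add (x : ℝ) : (∫ u in Set.Iic x, gpdf u) + gaussQ x = 1 := by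
  rw [gaussQ_eq, intervalIntegral.integral_Iic_add_Ioi gpdf_integrable.integrableOn gpdf_integrable.integrableOn,
    gpdf_integral]

lemma gaussQ_neg (x : ℝ) : gaussQ (-x) = 1 - gaussQ x := by
  have h1 : gaussQ (-x) = ∫ u in Set.Ioi (-x), gpdf (-u) := by
    rw [gaussQ_eq]; simp only [gpdf_even]
  rw [integral_comp_neg_Ioi, neg_neg] at h1
  linarith [gaussQ_Iic_add x]

lemma gaussQ_pos (x : ℝ) : 0 < gaussQ x := by
  rw [gaussQ_eq]
  rw [integral_pos_iff_support_of_nonneg_ae (Eventually.of_forall fun u => (gpdf_pos u).le)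
    gpdf_integrable.integrableOn]
  have hs : Function.support gpdf = Set.univ :=
    Set.eq_univ_iff_forall.2 fun u => (gpdf_pos u).ne'
  rw [hs]
  simp [Real.volume_Ioi]

lemma gaussQ_lt_one (x : ℝ) : gaussQ x < 1 := by
  have := gaussQ_neg (-x)
  rw [neg_neg] at this
  have := gaussQ_pos (-x)
  linarith [gaussQ_neg x, gaussQ_pos (-x)]

lemma gaussQ_nonneg (x : ℝ) : 0 ≤ gaussQ x := (gaussQ_pos x).le

lemma gaussQ_hasDerivAt (x : ℝ) : HasDerivAt gaussQ (-(gpdf x)) x := by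
  have hG : ∀ z : ℝ, gaussQ z = 1 - ((∫ u in Set.Iic (0:ℝ), gpdf u) + ∫ u in (0:ℝ)..z, gpdf u) := by
    intro z
    have h1 := gaussQ_Iic_add z
    have h2 : (∫ u in Set.Iic z, gpdf u) - ∫ u in Set.Iic (0:ℝ), gpdf u = ∫ u in (0:ℝ)..z, gpdf u :=
      intervalIntegral.integral_Iic_sub_Iic gpdf_integrable.integrableOn gpdf_integrable.integrableOn
    linarith
  have hd : HasDerivAt (fun z : ℝ => ∫ u in (0:ℝ)..z, gpdf u) (gpdf x) x :=
    intervalIntegral.integral_hasDerivAt_right gpdf_integrable.intervalIntegrable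
      (gpdf_cont.stronglyMeasurable.stronglyMeasurableAtFilter) gpdf_cont.continuousAt
  have : HasDerivAt (fun z : ℝ => 1 - ((∫ u in Set.Iic (0:ℝ), gpdf u) + ∫ u in (0:ℝ)..z, gpdf u))
      (-(gpdf x)) x := ((hd.const_add _).const_sub _)
  exact this.congr_of_eventuallyEq (Eventually.of_forall hG)

lemma gaussQ_cont : Continuous gaussQ :=
  continuous_iff_continuousAt.2 fun x => (gaussQ_hasDerivAt x).continuousAt

lemma eta_eq (t : ℝ) : eta t = -(t * Real.log t) := by rw [eta]; ring

lemma eta_cont : Continuous eta := by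
  have h : eta = fun t => -(t * Real.log t) := funext eta_eq
  rw [h]; exact Real.continuous_mul_log.neg

lemma binEnt_cont : Continuous binEnt :=
  (eta_cont.add (eta_cont.comp (continuous_const.sub continuous_id))).congr fun p => rfl

lemma binEnt_sym (p : ℝ) : binEnt (1 - p) = binEnt p := by
  simp [binEnt, sub_sub_cancel, add_comm]

lemma eta_hasDerivAt {t : ℝ} (ht : t ≠ 0) : HasDerivAt eta (-(Real.log t + 1)) t := by
  have := (Real.hasDerivAt_mul_log ht).neg
  simpa [eta_eq] using this.congr_of_eventuallyEq (Eventually.of_forall fun u => by rw [eta_eq]; rfl)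

lemma binEnt_hasDerivAt {p : ℝ} (h0 : p ≠ 0) (h1 : p ≠ 1) :
    HasDerivAt binEnt (Real.log (1 - p) - Real.log p) p := by
  have h1' : (1 : ℝ) - p ≠ 0 := sub_ne_zero.2 (Ne.symm h1)
  have hinner : HasDerivAt (fun q : ℝ => 1 - q) (-1) p := by
    simpa using (hasDerivAt_id p).const_sub 1
  have h2 : HasDerivAt (fun q : ℝ => eta (1 - q)) ((-(Real.log (1 - p) + 1)) * (-1)) p :=
    (eta_hasDerivAt h1').comp p hinner
  have := (eta_hasDerivAt h0).add h2
  have heq : (-(Real.log p + 1)) + (-(Real.log (1 - p) + 1)) * (-1) = Real.log (1 - p) - Real.log p := by ring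
  rw [heq] at this
  exact this.congr_of_eventuallyEq (Eventually.of_forall fun q => rfl)

lemma gpdf_le_one (u : ℝ) : gpdf u ≤ 1 := by
  have h1 : Real.exp (-u ^ 2 / 2) ≤ 1 := by
    rw [Real.exp_le_one_iff]; nlinarith [sq_nonneg u]
  have h2 : (1:ℝ) ≤ Real.sqrt (2 * Real.pi) := by
    rw [show (1:ℝ) = Real.sqrt 1 by simp]
    apply Real.sqrt_le_sqrt
    nlinarith [Real.pi_gt_three]
  calc gpdf u ≤ (Real.sqrt (2 * Real.pi))⁻¹ * 1 := by
        apply mul_le_mul_of_nonneg_left h1 (by positivity)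
    _ ≤ 1 := by
        rw [mul_one]
        exact inv_le_one_of_one_le₀ h2

section Meas
open Metric
variable {ν : Measure ℝ} [IsProbabilityMeasure ν]

lemma int_comp_bounded {f : ℝ → ℝ} (hf : Continuous f) (C : ℝ) (hC : ∀ x, ‖f x‖ ≤ C) :
    Integrable f ν :=
  (integrable_const C).mono' hf.aestronglyMeasurable (Eventually.of_forall hC)

lemma integral_pos_on {f : ℝ → ℝ} (hi : Integrable f ν) (hnn : ∀ x, 0 ≤ f x) {S : Set ℝ}
    (hS : ∀ x ∈ S, f x ≠ 0) (hSpos : 0 < ν S) : 0 < ∫ x, f x ∂ν := by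
  rw [integral_pos_iff_support_of_nonneg_ae (Eventually.of_forall hnn) hi]
  exact lt_of_lt_of_le hSpos (measure_mono fun x hx => hS x hx)

lemma int_gaussQ_comp {g : ℝ → ℝ} (hg : Continuous g) (w : ℝ) :
    Integrable (fun x => gaussQ (w * g x)) ν := by
  apply int_comp_bounded (gaussQ_cont.comp (continuous_const.mul hg)) 1
  intro x
  show ‖gaussQ (w * g x)‖ ≤ 1
  rw [Real.norm_eq_abs, abs_le]
  exact ⟨by linarith [gaussQ_pos (w * g x)], (gaussQ_lt_one (w * g x)).le⟩

lemma int_binEnt_comp {g : ℝ → ℝ} (hg : Continuous g) (w : ℝ) :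
    Integrable (fun x => binEnt (gaussQ (w * g x))) ν := by
  obtain ⟨C, hC⟩ := (isCompact_Icc (a := (0:ℝ)) (b := 1)).exists_bound_of_continuousOn
    binEnt_cont.continuousOn
  apply int_comp_bounded (binEnt_cont.comp (gaussQ_cont.comp (continuous_const.mul hg))) C
  intro x
  exact hC _ ⟨gaussQ_nonneg _, (gaussQ_lt_one _).le⟩

lemma intQ_pos {g : ℝ → ℝ} (hg : Continuous g) (w : ℝ) :
    0 < ∫ x, gaussQ (w * g x) ∂ν := by
  apply integral_pos_on (int_gaussQ_comp hg w) (fun x => gaussQ_nonneg _) (S := Set.univ)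
    (fun x _ => (gaussQ_pos _).ne')
  simp

lemma intQ_lt_one {g : ℝ → ℝ} (hg : Continuous g) (w : ℝ) :
    (∫ x, gaussQ (w * g x) ∂ν) < 1 := by
  have hi : Integrable (fun x => 1 - gaussQ (w * g x)) ν :=
    (integrable_const 1).sub (int_gaussQ_comp hg w)
  have h : 0 < ∫ x, (1 - gaussQ (w * g x)) ∂ν := by
    apply integral_pos_on hi
      (fun x => by linarith [gaussQ_lt_one (w * g x)]) (S := Set.univ)
      (fun x _ hh => by have := gaussQ_lt_one (w * g x); linarith [sub_eq_zero.1 hh])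
    simp
  rw [integral_sub (integrable_const 1) (int_gaussQ_comp hg w), integral_const] at h
  simp at h
  linarith

lemma hasDerivAt_intQ {g : ℝ → ℝ} (hg : Continuous g) (hgabs : ∀ x, |g x| = |x|)
    (habs : Integrable (fun x => |x|) ν) (w : ℝ) :
    HasDerivAt (fun v => ∫ x, gaussQ (v * g x) ∂ν) (∫ x, -(gpdf (w * g x) * g x) ∂ν) w := by
  have key := hasDerivAt_integral_of_dominated_loc_of_deriv_le (μ := ν)
    (F := fun v x => gaussQ (v * g x)) (F' := fun v x => -(gpdf (v * g x) * g x))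
    (x₀ := w) (bound := fun x => |x|) (s := Metric.ball w 1) (Metric.ball_mem_nhds w one_pos)
    (Eventually.of_forall fun v =>
      ((gaussQ_cont.comp (continuous_const.mul hg))).aestronglyMeasurable)
    (int_gaussQ_comp hg w)
    (((gpdf_cont.comp (continuous_const.mul hg)).mul hg).neg.aestronglyMeasurable)
    (Eventually.of_forall fun x v _ => by
      show ‖-(gpdf (v * g x) * g x)‖ ≤ |x|
      rw [norm_neg, Real.norm_eq_abs, abs_mul, ← hgabs x]
      calc |gpdf (v * g x)| * |g x| ≤ 1 * |g x| := by
            apply mul_le_mul_of_nonneg_right _ (abs_nonneg _)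
            rw [abs_of_pos (gpdf_pos _)]; exact gpdf_le_one _
        _ = |g x| := one_mul _)
    habs
    (Eventually.of_forall fun x v _ => by
      have h := (gaussQ_hasDerivAt (v * g x)).comp v (hasDerivAt_mul_const (g x))
      rw [neg_mul] at h; exact h)
  exact key.2

end Meas

lemma gaussQ_zero : gaussQ 0 = 1/2 := by
  have := gaussQ_neg 0
  rw [neg_zero] at this
  linarith

lemma gaussQ_strictAnti : StrictAnti gaussQ := by
  apply strictAnti_of_deriv_neg
  intro x
  rw [(gaussQ_hasDerivAt x).deriv]
  simpa using gpdf_pos x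

lemma gaussQ_gt_half {t : ℝ} (ht : t < 0) : 1/2 < gaussQ t := by
  have := gaussQ_strictAnti ht
  rwa [gaussQ_zero] at this

lemma gaussQ_lt_half {t : ℝ} (ht : 0 < t) : gaussQ t < 1/2 := by
  have := gaussQ_strictAnti ht
  rwa [gaussQ_zero] at this

section Core
variable {μ : Measure ℝ} [IsProbabilityMeasure μ]

/-- `P μ w = ∫ Q(w x) dμ`. -/
noncomputable def Pfun (μ : Measure ℝ) (w : ℝ) : ℝ := ∫ x, gaussQ (w * x) ∂μ
/-- `Pa μ w = ∫ Q(w |x|) dμ`. -/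
noncomputable def Pafun (μ : Measure ℝ) (w : ℝ) : ℝ := ∫ x, gaussQ (w * |x|) ∂μ
/-- `F μ w = h(Pa) - h(P)`. -/
noncomputable def Ffun (μ : Measure ℝ) (w : ℝ) : ℝ := binEnt (Pafun μ w) - binEnt (Pfun μ w)

lemma int_gaussQ_id (w : ℝ) : Integrable (fun x => gaussQ (w * x)) μ :=
  int_gaussQ_comp continuous_id w
lemma int_gaussQ_abs (w : ℝ) : Integrable (fun x => gaussQ (w * |x|)) μ :=
  int_gaussQ_comp continuous_abs w

lemma Pfun_pos (w : ℝ) : 0 < Pfun μ w := intQ_pos continuous_id w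
lemma Pfun_lt_one (w : ℝ) : Pfun μ w < 1 := intQ_lt_one continuous_id w
lemma Pafun_pos (w : ℝ) : 0 < Pafun μ w := intQ_pos continuous_abs w
lemma Pafun_lt_one (w : ℝ) : Pafun μ w < 1 := intQ_lt_one continuous_abs w

lemma Pfun_neg (w : ℝ) : Pfun μ (-w) = 1 - Pfun μ w := by
  have h : ∀ x : ℝ, gaussQ (-w * x) = 1 - gaussQ (w * x) := by
    intro x; rw [show -w * x = -(w*x) by ring, gaussQ_neg]
  unfold Pfun
  rw [show (fun x => gaussQ (-w * x)) = fun x => 1 - gaussQ (w * x) from funext h]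
  rw [integral_sub (integrable_const 1) (int_gaussQ_id w)]
  simp

lemma Pafun_neg (w : ℝ) : Pafun μ (-w) = 1 - Pafun μ w := by
  have h : ∀ x : ℝ, gaussQ (-w * |x|) = 1 - gaussQ (w * |x|) := by
    intro x; rw [show -w * |x| = -(w*|x|) by ring, gaussQ_neg]
  unfold Pafun
  rw [show (fun x => gaussQ (-w * |x|)) = fun x => 1 - gaussQ (w * |x|) from funext h]
  rw [integral_sub (integrable_const 1) (int_gaussQ_abs w)]
  simp

lemma Ffun_even (w : ℝ) : Ffun μ (-w) = Ffun μ w := by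
  unfold Ffun
  rw [Pfun_neg, Pafun_neg, binEnt_sym, binEnt_sym]

end Core

section Core2
variable {μ : Measure ℝ} [IsProbabilityMeasure μ]

/-- If `μ(Iio 0) > 0` and `w > 0` then `Pa < P`. -/
lemma Pafun_lt_Pfun (hIio : 0 < μ (Set.Iio 0)) {w : ℝ} (hw : 0 < w) :
    Pafun μ w < Pfun μ w := by
  have hi : Integrable (fun x => gaussQ (w * x) - gaussQ (w * |x|)) μ :=
    (int_gaussQ_id w).sub (int_gaussQ_abs w)
  have hnn : ∀ x : ℝ, 0 ≤ gaussQ (w * x) - gaussQ (w * |x|) := by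
    intro x
    rcases le_or_gt 0 x with hx | hx
    · rw [abs_of_nonneg hx]; simp
    · rw [abs_of_neg hx, show w * -x = -(w * x) by ring, gaussQ_neg]
      have : w * x < 0 := mul_neg_of_pos_of_neg hw hx
      linarith [gaussQ_gt_half this]
  have hpos : 0 < ∫ x, (gaussQ (w * x) - gaussQ (w * |x|)) ∂μ := by
    apply integral_pos_on hi hnn (S := Set.Iio 0) _ hIio
    intro x hx
    simp only [Set.mem_Iio] at hx
    rw [abs_of_neg hx, show w * -x = -(w * x) by ring, gaussQ_neg]
    have : w * x < 0 := mul_neg_of_pos_of_neg hw hx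
    have := gaussQ_gt_half this
    intro hc; linarith [sub_eq_zero.1 hc]
  rw [integral_sub (int_gaussQ_id w) (int_gaussQ_abs w)] at hpos
  unfold Pfun Pafun
  linarith

/-- If `μ(Ioi 0) > 0` and `w > 0` then `Pa < 1 - P`. -/
lemma Pafun_lt_one_sub_Pfun (hIoi : 0 < μ (Set.Ioi 0)) {w : ℝ} (hw : 0 < w) :
    Pafun μ w < 1 - Pfun μ w := by
  have hint2 : Integrable (fun x => 1 - gaussQ (w * x)) μ :=
    (integrable_const 1).sub (int_gaussQ_id w)
  have hi : Integrable (fun x => (1 - gaussQ (w * x)) - gaussQ (w * |x|)) μ :=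
    hint2.sub (int_gaussQ_abs w)
  have hnn : ∀ x : ℝ, 0 ≤ (1 - gaussQ (w * x)) - gaussQ (w * |x|) := by
    intro x
    rcases lt_or_ge 0 x with hx | hx
    · rw [abs_of_pos hx]
      have : 0 < w * x := mul_pos hw hx
      linarith [gaussQ_lt_half this]
    · rw [abs_of_nonpos hx, show w * -x = -(w * x) by ring, gaussQ_neg]
      linarith
  have hpos : 0 < ∫ x, ((1 - gaussQ (w * x)) - gaussQ (w * |x|)) ∂μ := by
    apply integral_pos_on hi hnn (S := Set.Ioi 0) _ hIoi
    intro x hx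
    simp only [Set.mem_Ioi] at hx
    rw [abs_of_pos hx]
    have : 0 < w * x := mul_pos hw hx
    have := gaussQ_lt_half this
    intro hc; linarith [sub_eq_zero.1 hc]
  rw [integral_sub hint2 (int_gaussQ_abs w),
    integral_sub (integrable_const 1) (int_gaussQ_id w), integral_const] at hpos
  simp only [probReal_univ, ENNReal.toReal_one, smul_eq_mul, one_mul] at hpos
  unfold Pfun Pafun
  linarith

end Core2

lemma gpdf_abs (t : ℝ) : gpdf |t| = gpdf t := by
  rcases le_or_gt 0 t with h | h
  · rw [abs_of_nonneg h]
  · rw [abs_of_neg h, gpdf_even]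

section Core3
variable {μ : Measure ℝ} [IsProbabilityMeasure μ]

lemma hasDerivAt_Pfun (habs : Integrable (fun x => |x|) μ) (w : ℝ) :
    HasDerivAt (Pfun μ) (∫ x, -(gpdf (w * x) * x) ∂μ) w :=
  hasDerivAt_intQ continuous_id (fun _ => rfl) habs w

lemma hasDerivAt_Pafun (habs : Integrable (fun x => |x|) μ) (w : ℝ) :
    HasDerivAt (Pafun μ) (∫ x, -(gpdf (w * |x|) * |x|) ∂μ) w :=
  hasDerivAt_intQ continuous_abs (fun x => abs_abs x) habs w

lemma hasDerivAt_Ffun (habs : Integrable (fun x => |x|) μ) (w : ℝ) :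
    HasDerivAt (Ffun μ)
      ((Real.log (1 - Pafun μ w) - Real.log (Pafun μ w)) * (∫ x, -(gpdf (w * |x|) * |x|) ∂μ)
        - (Real.log (1 - Pfun μ w) - Real.log (Pfun μ w)) * (∫ x, -(gpdf (w * x) * x) ∂μ)) w := by
  have h1 : HasDerivAt (fun v => binEnt (Pafun μ v))
      ((Real.log (1 - Pafun μ w) - Real.log (Pafun μ w)) * (∫ x, -(gpdf (w * |x|) * |x|) ∂μ)) w :=
    (binEnt_hasDerivAt (Pafun_pos w).ne' (Pafun_lt_one w).ne).comp w (hasDerivAt_Pafun habs w)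
  have h2 : HasDerivAt (fun v => binEnt (Pfun μ v))
      ((Real.log (1 - Pfun μ w) - Real.log (Pfun μ w)) * (∫ x, -(gpdf (w * x) * x) ∂μ)) w :=
    (binEnt_hasDerivAt (Pfun_pos w).ne' (Pfun_lt_one w).ne).comp w (hasDerivAt_Pfun habs w)
  exact h1.sub h2

lemma int_gpdf_abs_mul (habs : Integrable (fun x => |x|) μ) (w : ℝ) :
    Integrable (fun x => gpdf (w * |x|) * |x|) μ := by
  apply habs.mono' (((gpdf_cont.comp (continuous_const.mul continuous_abs)).mul
    continuous_abs).aestronglyMeasurable)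
  apply Eventually.of_forall
  intro x
  show ‖gpdf (w * |x|) * |x|‖ ≤ |x|
  rw [Real.norm_eq_abs, abs_mul, abs_of_pos (gpdf_pos _), abs_abs]
  calc gpdf (w * |x|) * |x| ≤ 1 * |x| :=
        mul_le_mul_of_nonneg_right (gpdf_le_one _) (abs_nonneg _)
    _ = |x| := one_mul _

lemma int_gpdf_mul (habs : Integrable (fun x => |x|) μ) (w : ℝ) :
    Integrable (fun x => gpdf (w * x) * x) μ := by
  apply habs.mono' (((gpdf_cont.comp (continuous_const.mul continuous_id)).mul
    continuous_id).aestronglyMeasurable)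
  apply Eventually.of_forall
  intro x
  show ‖gpdf (w * x) * x‖ ≤ |x|
  rw [Real.norm_eq_abs, abs_mul, abs_of_pos (gpdf_pos _)]
  calc gpdf (w * x) * |x| ≤ 1 * |x| :=
        mul_le_mul_of_nonneg_right (gpdf_le_one _) (abs_nonneg _)
    _ = |x| := one_mul _

lemma deriv_Ffun_neg (habs : Integrable (fun x => |x|) μ)
    (hIio : 0 < μ (Set.Iio 0)) (hIoi : 0 < μ (Set.Ioi 0)) {w : ℝ} (hw : 0 < w) :
    deriv (Ffun μ) w < 0 := by
  rw [(hasDerivAt_Ffun habs w).deriv]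
  set P := Pfun μ w with hP
  set Pa := Pafun μ w with hPa
  set A := ∫ x, gpdf (w * |x|) * |x| ∂μ with hA
  set B := ∫ x, gpdf (w * x) * x ∂μ with hB
  have hDa : (∫ x, -(gpdf (w * |x|) * |x|) ∂μ) = -A := by rw [integral_neg]
  have hD : (∫ x, -(gpdf (w * x) * x) ∂μ) = -B := by rw [integral_neg]
  rw [hDa, hD]
  -- pointwise: gpdf (w * |x|) * |x| = |gpdf (w * x) * x|
  have hptw : ∀ x : ℝ, gpdf (w * |x|) * |x| = |gpdf (w * x) * x| := by
    intro x
    rw [abs_mul, abs_of_pos (gpdf_pos _), show w * |x| = |w * x| by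
      rw [abs_mul, abs_of_pos hw], gpdf_abs]
  have hBA : |B| ≤ A := by
    have h1 : |B| ≤ ∫ x, |gpdf (w * x) * x| ∂μ := by
      simpa only [Real.norm_eq_abs] using
        norm_integral_le_integral_norm (μ := μ) (fun x => gpdf (w * x) * x)
    have h2 : A = ∫ x, |gpdf (w * x) * x| ∂μ := by
      rw [hA]; congr 1; exact funext hptw
    linarith
  have hApos : 0 < A := by
    apply integral_pos_on (int_gpdf_abs_mul habs w)
      (fun x => mul_nonneg (gpdf_pos _).le (abs_nonneg _)) (S := Set.Ioi 0) _ hIoi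
    intro x hx
    simp only [Set.mem_Ioi] at hx
    exact (mul_pos (gpdf_pos _) (abs_pos.2 hx.ne')).ne'
  have hP0 : 0 < P := Pfun_pos w
  have hP1 : P < 1 := Pfun_lt_one w
  have hPa0 : 0 < Pa := Pafun_pos w
  have hlt1 : Pa < P := Pafun_lt_Pfun hIio hw
  have hlt2 : Pa < 1 - P := Pafun_lt_one_sub_Pfun hIoi hw
  have l1 : Real.log Pa < Real.log P := Real.log_lt_log hPa0 hlt1
  have l2 : Real.log (1 - P) < Real.log (1 - Pa) := Real.log_lt_log (by linarith) (by linarith)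
  have l3 : Real.log Pa < Real.log (1 - P) := Real.log_lt_log hPa0 hlt2
  have l4 : Real.log P < Real.log (1 - Pa) := Real.log_lt_log hP0 (by linarith)
  set c := Real.log (1 - P) - Real.log P with hc
  set ca := Real.log (1 - Pa) - Real.log Pa with hca
  have habs_lt : |c| < ca := abs_lt.2 ⟨by rw [hc, hca]; linarith, by rw [hc, hca]; linarith⟩
  have key : c * B < ca * A := by
    calc c * B ≤ |c * B| := le_abs_self _
      _ = |c| * |B| := abs_mul _ _
      _ ≤ |c| * A := mul_le_mul_of_nonneg_left hBA (abs_nonneg _)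
      _ < ca * A := mul_lt_mul_of_pos_right habs_lt hApos
  nlinarith [key]

lemma Ffun_strictAntiOn (habs : Integrable (fun x => |x|) μ)
    (hIio : 0 < μ (Set.Iio 0)) (hIoi : 0 < μ (Set.Ioi 0)) :
    StrictAntiOn (Ffun μ) (Set.Ioi 0) := by
  apply strictAntiOn_of_deriv_neg (convex_Ioi 0)
  · intro w _
    exact (hasDerivAt_Ffun habs w).continuousAt.continuousWithinAt
  · intro w hw
    rw [interior_Ioi] at hw
    exact deriv_Ffun_neg habs hIio hIoi hw

end Core3

lemma binEnt_gaussQ_abs (w x : ℝ) : binEnt (gaussQ (w * |x|)) = binEnt (gaussQ (w * x)) := by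
  rcases le_or_gt 0 x with h | h
  · rw [abs_of_nonneg h]
  · rw [abs_of_neg h, show w * -x = -(w*x) by ring, gaussQ_neg, binEnt_sym]

section Final
variable {μ : Measure ℝ} [IsProbabilityMeasure μ]

lemma miMeas_map_sub (w : ℝ) :
    miMeas (μ.map (fun x : ℝ => |x|)) w - miMeas μ w = Ffun μ w := by
  have hmap1 : ∫ y, gaussQ (w * y) ∂(μ.map (fun x : ℝ => |x|)) = Pafun μ w := by
    rw [integral_map (f := fun y => gaussQ (w * y)) continuous_abs.measurable.aemeasurable
      ((gaussQ_cont.comp (continuous_mul_left w)).aestronglyMeasurable)]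
    rfl
  have hmap2 : ∫ y, binEnt (gaussQ (w * y)) ∂(μ.map (fun x : ℝ => |x|))
      = ∫ x, binEnt (gaussQ (w * x)) ∂μ := by
    rw [integral_map (f := fun y => binEnt (gaussQ (w * y)))
      continuous_abs.measurable.aemeasurable
      ((binEnt_cont.comp (gaussQ_cont.comp (continuous_mul_left w))).aestronglyMeasurable)]
    exact integral_congr_ae (Eventually.of_forall fun x => binEnt_gaussQ_abs w x)
  unfold miMeas Ffun Pfun
  rw [hmap1, hmap2]
  ring

lemma Ffun_zero_of_Iio (h : μ (Set.Iio 0) = 0) (w : ℝ) : Ffun μ w = 0 := by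
  have hset : {x : ℝ | ¬ 0 ≤ x} = Set.Iio 0 := by ext x; simp [not_le]
  have hae : ∀ᵐ x ∂μ, 0 ≤ x := by rw [ae_iff, hset]; exact h
  have : Pafun μ w = Pfun μ w := by
    apply integral_congr_ae
    exact hae.mono fun x hx => by
      show gaussQ (w * |x|) = gaussQ (w * x)
      rw [abs_of_nonneg hx]
  rw [Ffun, this, sub_self]

lemma Ffun_zero_of_Ioi (h : μ (Set.Ioi 0) = 0) (w : ℝ) : Ffun μ w = 0 := by
  have hset : {x : ℝ | ¬ x ≤ 0} = Set.Ioi 0 := by ext x; simp [not_le]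
  have hae : ∀ᵐ x ∂μ, x ≤ 0 := by rw [ae_iff, hset]; exact h
  have h1 : Pafun μ w = ∫ x, (1 - gaussQ (w * x)) ∂μ := by
    apply integral_congr_ae
    refine hae.mono fun x hx => ?_
    show gaussQ (w * |x|) = 1 - gaussQ (w * x)
    rw [abs_of_nonpos hx, show w * -x = -(w*x) by ring, gaussQ_neg]
  have h2 : Pafun μ w = 1 - Pfun μ w := by
    rw [h1, integral_sub (integrable_const 1) (int_gaussQ_id w), integral_const]
    simp [Pfun]
  rw [Ffun, h2, binEnt_sym, sub_self]

lemma Ffun_abs (w : ℝ) : Ffun μ |w| = Ffun μ w := by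
  rcases le_or_gt 0 w with h | h
  · rw [abs_of_nonneg h]
  · rw [abs_of_neg h, Ffun_even]

end Final

/-- Lemma 2, equality condition: if `|w₁| ≠ |w₂|` and `μ` is not a Dirac measure, then
the folded distribution achieves the same Wyner secrecy rate if and only if the support
of `μ` is contained in `[0,∞)` or in `(-∞,0]`. -/
theorem folded_rate_eq_iff (w₁ w₂ : ℝ) (hw₁ : w₁ ≠ 0) (hw₂ : w₂ ≠ 0)
    (hne : |w₁| ≠ |w₂|) (μ : Measure ℝ) [IsProbabilityMeasure μ]
    (hint : Integrable (fun x : ℝ => x ^ 2) μ)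
    (hnd : ∀ x : ℝ, μ ≠ Measure.dirac x) :
    wynerRs w₁ w₂ (μ.map (fun x : ℝ => |x|)) = wynerRs w₁ w₂ μ ↔
      (μ (Set.Iio 0) = 0 ∨ μ (Set.Ioi 0) = 0) := by
  have habs : Integrable (fun x : ℝ => |x|) μ := by
    have h2 : Integrable (fun x : ℝ => (x ^ 2 + 1) / 2) μ :=
      (hint.add (integrable_const 1)).div_const 2
    apply h2.mono' continuous_abs.aestronglyMeasurable
    apply Eventually.of_forall
    intro x
    show |(|x|)| ≤ (x ^ 2 + 1) / 2
    rw [abs_abs]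
    nlinarith [sq_nonneg (|x| - 1), sq_abs x]
  have hkey : wynerRs w₁ w₂ (μ.map (fun x : ℝ => |x|)) - wynerRs w₁ w₂ μ
      = Ffun μ w₁ - Ffun μ w₂ := by
    have h1 := miMeas_map_sub (μ := μ) w₁
    have h2 := miMeas_map_sub (μ := μ) w₂
    unfold wynerRs
    linarith
  constructor
  · intro heq
    by_contra hcon
    push_neg at hcon
    obtain ⟨h1, h2⟩ := hcon
    have hIio : 0 < μ (Set.Iio 0) := pos_iff_ne_zero.2 h1
    have hIoi : 0 < μ (Set.Ioi 0) := pos_iff_ne_zero.2 h2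
    have hF : Ffun μ w₁ = Ffun μ w₂ := by
      rw [heq] at hkey
      linarith
    have hmono := Ffun_strictAntiOn habs hIio hIoi
    apply hne
    apply hmono.injOn (Set.mem_Ioi.2 (abs_pos.2 hw₁)) (Set.mem_Ioi.2 (abs_pos.2 hw₂))
    rw [Ffun_abs, Ffun_abs]
    exact hF
  · intro h
    have hF : ∀ w, Ffun μ w = 0 := by
      rcases h with h | h
      · exact fun w => Ffun_zero_of_Iio h w
      · exact fun w => Ffun_zero_of_Ioi h w
    have := hF w₁
    have := hF w₂
    linarith
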